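/- Let Ind and V be finite sets with |Ind| = u ≥ 1 and |V| = v ≥ 2, let X = V^Ind be the vertex set of the Hamming graph H(u,v), let Z be a finite set with |X| ≤ |Z|, let ε > 0, and let K be a channel matrix from X to Z satisfying ε-differential privacy with respect to the Hamming graph. Then the min-entropy leakage under the uniform input distribution satisfies I∞(X;Z) = log₂(Σ_{z∈Z} max_{x∈X} K(x,z)) ≤ u · log₂(v·e^ε / (v − 1 + e^ε)). -/

import Mathlib

open Finset

/-- The Hamming graph on `Ind → V`: two tuples are adjacent iff they differ in
exactly one coordinate. -/
def hammingGraph (Ind V : Type*) [Fintype Ind] [DecidableEq V] : SimpleGraph (Ind → V) where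
  Adj x y := hammingDist x y = 1
  symm := ⟨by intro x y h; rwa [hammingDist_comm]⟩
  loopless := ⟨by intro x h; simp [hammingDist_self] at h⟩

/-- `ε`-differential privacy of a channel matrix with respect to a graph. -/
def SatisfiesDP {A B : Type*} (G : SimpleGraph A) (ε : ℝ) (M : A → B → ℝ) : Prop :=
  ∀ (b : B) (a a' : A), G.Adj a a' → M a b ≤ Real.exp ε * M a' b

theorem stmt6 {Ind V Z : Type*} [Fintype Ind] [DecidableEq Ind] [Fintype V] [DecidableEq V] [Nonempty V]
    [Fintype Z]
    (u v : ℕ) (hu : Fintype.card Ind = u) (hu1 : 1 ≤ u)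
    (hv : Fintype.card V = v) (hv2 : 2 ≤ v)
    (hcard : Fintype.card (Ind → V) ≤ Fintype.card Z)
    (ε : ℝ) (hε : 0 < ε)
    (K : (Ind → V) → Z → ℝ)
    (hK0 : ∀ x z, 0 ≤ K x z)
    (hK1 : ∀ x, ∑ z, K x z = 1)
    (hdp : SatisfiesDP (hammingGraph Ind V) ε K) :
    Real.logb 2 (∑ z, Finset.univ.sup' Finset.univ_nonempty (fun x => K x z))
      ≤ (u : ℝ) * Real.logb 2 ((v : ℝ) * Real.exp ε / ((v : ℝ) - 1 + Real.exp ε)) := by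
  set c := Real.exp (-ε) with hc
  have hc0 : 0 < c := Real.exp_pos _
  have hce : c * Real.exp ε = 1 := by rw [hc, ← Real.exp_add]; simp
  -- DP along paths in the Hamming graph
  have key : ∀ n (x y : Ind → V), hammingDist x y = n → ∀ z,
      K x z ≤ Real.exp ε ^ n * K y z := by
    intro n
    induction n with
    | zero =>
      intro x y h z
      rw [hammingDist_eq_zero.mp h]; simp
    | succ n ih =>
      intro x y h z
      have hne : (Finset.univ.filter fun j => x j ≠ y j).Nonempty := by
        rw [← Finset.card_pos,
          show (Finset.univ.filter fun j => x j ≠ y j).card = hammingDist x y from rfl, h]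
        omega
      obtain ⟨i, hi⟩ := hne
      have hxi : x i ≠ y i := (Finset.mem_filter.mp hi).2
      set w := Function.update x i (y i) with hw
      have hadj : (hammingGraph Ind V).Adj x w := by
        show hammingDist x w = 1
        have hfil : (Finset.univ.filter fun j => x j ≠ w j) = {i} := by
          ext j
          simp only [Finset.mem_filter, Finset.mem_univ, true_and, Finset.mem_singleton, hw]
          constructor
          · intro hj
            by_contra hji
            exact hj (Function.update_of_ne hji _ _).symm
          · rintro rfl
            rw [Function.update_self]
            exact hxi
        show (Finset.univ.filter fun j => x j ≠ w j).card = 1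
        rw [hfil, Finset.card_singleton]
      have hwy : hammingDist w y = n := by
        have hfil : (Finset.univ.filter fun j => w j ≠ y j)
            = (Finset.univ.filter fun j => x j ≠ y j).erase i := by
          ext j
          simp only [Finset.mem_filter, Finset.mem_univ, true_and, Finset.mem_erase, hw]
          constructor
          · intro hj
            have hji : j ≠ i := fun h' => hj (by rw [h', Function.update_self])
            rw [Function.update_of_ne hji] at hj
            exact ⟨hji, hj⟩
          · rintro ⟨hji, hj⟩
            rwa [Function.update_of_ne hji]
        show (Finset.univ.filter fun j => w j ≠ y j).card = n
        rw [hfil, Finset.card_erase_of_mem hi,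
          show (Finset.univ.filter fun j => x j ≠ y j).card = hammingDist x y from rfl, h]
        omega
      calc K x z ≤ Real.exp ε * K w z := hdp z x w hadj
        _ ≤ Real.exp ε * (Real.exp ε ^ n * K y z) :=
            mul_le_mul_of_nonneg_left (ih w y hwy z) (Real.exp_pos ε).le
        _ = Real.exp ε ^ (n+1) * K y z := by ring
  set S : ℝ := 1 + ((v:ℝ) - 1) * c with hS
  have hv1 : (1:ℝ) ≤ (v:ℝ) := by exact_mod_cast Nat.one_le_of_lt hv2
  have hS0 : 0 < S := by
    rw [hS]
    have : 0 ≤ ((v:ℝ) - 1) * c := mul_nonneg (by linarith) hc0.le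
    linarith
  -- counting sum of c^dist
  have hcount : ∀ y : Ind → V, ∑ x : Ind → V, c ^ hammingDist y x = S ^ u := by
    intro y
    have hprod : ∀ x : Ind → V,
        c ^ hammingDist y x = ∏ i, (if x i = y i then (1:ℝ) else c) := by
      intro x
      rw [Finset.prod_ite, Finset.prod_const, Finset.prod_const, one_pow, one_mul]
      congr 1
      rw [hammingDist_comm]
      rfl
    simp_rw [hprod]
    have hps := Finset.prod_univ_sum (fun _ : Ind => (Finset.univ : Finset V))
        (fun i a => if a = y i then (1:ℝ) else c)
    rw [Fintype.piFinset_univ] at hps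
    rw [show (∑ x : Ind → V, ∏ i, (if x i = y i then (1:ℝ) else c))
        = ∏ i, ∑ a : V, (if a = y i then (1:ℝ) else c) from hps.symm]
    have hin : ∀ i : Ind, ∑ a : V, (if a = y i then (1:ℝ) else c) = S := by
      intro i
      rw [Finset.sum_ite, Finset.sum_const, Finset.sum_const, Finset.filter_eq',
        if_pos (Finset.mem_univ _), Finset.filter_ne', Finset.card_singleton,
        Finset.card_erase_of_mem (Finset.mem_univ _), Finset.card_univ, hv, hS]
      have : ((v - 1 : ℕ) : ℝ) = (v:ℝ) - 1 := by
        have := Nat.one_le_of_lt hv2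
        push_cast [Nat.cast_sub this]
        ring
      simp [this]
    simp_rw [hin]
    rw [Finset.prod_const, Finset.card_univ, hu]
  -- per-output bound
  have hmax : ∀ z : Z,
      (Finset.univ.sup' Finset.univ_nonempty (fun x => K x z)) * S ^ u ≤ ∑ x, K x z := by
    intro z
    obtain ⟨x0, -, hx0⟩ := Finset.exists_mem_eq_sup' Finset.univ_nonempty (fun x => K x z)
    rw [hx0]
    have hbd : ∀ x : Ind → V, K x0 z * c ^ hammingDist x0 x ≤ K x z := by
      intro x
      have h1 := key (hammingDist x0 x) x0 x rfl z
      set d := hammingDist x0 x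
      have h2 := mul_le_mul_of_nonneg_left h1 (pow_nonneg hc0.le d)
      calc K x0 z * c ^ d = c ^ d * K x0 z := by ring
        _ ≤ c ^ d * (Real.exp ε ^ d * K x z) := h2
        _ = (c * Real.exp ε) ^ d * K x z := by rw [mul_pow]; ring
        _ = K x z := by rw [hce, one_pow, one_mul]
    calc K x0 z * S ^ u = ∑ x : Ind → V, K x0 z * c ^ hammingDist x0 x := by
          rw [← Finset.mul_sum, hcount x0]
      _ ≤ ∑ x, K x z := Finset.sum_le_sum fun x _ => hbd x
  -- sum over outputs
  set M : ℝ := ∑ z, Finset.univ.sup' Finset.univ_nonempty (fun x => K x z) with hM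
  have hsum : M * S ^ u ≤ (v:ℝ) ^ u := by
    rw [hM, Finset.sum_mul]
    calc ∑ z, (Finset.univ.sup' Finset.univ_nonempty (fun x => K x z)) * S ^ u
        ≤ ∑ z, ∑ x, K x z := Finset.sum_le_sum fun z _ => hmax z
      _ = ∑ x : Ind → V, ∑ z, K x z := Finset.sum_comm
      _ = (Fintype.card (Ind → V) : ℝ) := by simp [hK1]
      _ = (v:ℝ) ^ u := by rw [Fintype.card_fun, hu, hv]; push_cast; ring
  have hden : (0:ℝ) < (v:ℝ) - 1 + Real.exp ε := by
    have := Real.exp_pos ε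
    linarith
  have hM1 : (1:ℝ) ≤ M := by
    have x0 : Ind → V := Classical.arbitrary _
    calc (1:ℝ) = ∑ z, K x0 z := (hK1 x0).symm
      _ ≤ M := Finset.sum_le_sum fun z _ => Finset.le_sup' (fun x => K x z) (Finset.mem_univ x0)
  have h3 : (v:ℝ) / S = (v:ℝ) * Real.exp ε / ((v:ℝ) - 1 + Real.exp ε) := by
    rw [div_eq_div_iff hS0.ne' hden.ne', hS]
    linear_combination ((v:ℝ) - (v:ℝ)^2) * hce
  have hMle : M ≤ ((v:ℝ) * Real.exp ε / ((v:ℝ) - 1 + Real.exp ε)) ^ u := by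
    rw [← h3, div_pow, le_div_iff₀ (pow_pos hS0 u)]
    exact hsum
  calc Real.logb 2 M ≤ Real.logb 2 (((v:ℝ) * Real.exp ε / ((v:ℝ) - 1 + Real.exp ε)) ^ u) := by
        exact Real.logb_le_logb_of_le one_lt_two (by linarith) hMle
      _ = (u:ℝ) * Real.logb 2 ((v:ℝ) * Real.exp ε / ((v:ℝ) - 1 + Real.exp ε)) := by
        rw [Real.logb_pow]
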